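/- Let G be a k-cycle graph whose cycles all have equal length l = l_1 = ... = l_k (non-central vertices per cycle), and let v_c be the central vertex. The broadcast scheme in which v_c informs cycle C_i at time units i and 2k+1-i completes in exactly k + ⌈(l-1)/2⌉ time units, and this equals b(v_c,G). -/

import Mathlib

/-- A telephone broadcast scheme from originator `v` completing within `t` time units:
a nondecreasing sequence of sets of informed vertices, starting from `{v}`, such that
each newly informed vertex is called by a distinct already-informed neighbor, and all
vertices are informed by time `t`. -/
def IsBroadcastIn {V : Type*} (G : SimpleGraph V) (v : V) (t : ℕ) : Prop :=
  ∃ f : ℕ → Set V, f 0 = {v} ∧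
    (∀ n, f n ⊆ f (n + 1)) ∧
    (∀ n, ∃ g : V → V, Set.InjOn g (f (n + 1) \ f n) ∧
      ∀ u ∈ f (n + 1) \ f n, g u ∈ f n ∧ G.Adj (g u) u) ∧
    f t = Set.univ

/-- The broadcast time of the vertex `v` in the graph `G`. -/
noncomputable def broadcastTime {V : Type*} (G : SimpleGraph V) (v : V) : ℕ :=
  sInf {t | IsBroadcastIn G v t}


/-- The `k`-cycle (flower) graph: `k` cycles sharing exactly one central vertex
(represented by `none`); cycle `i` has `l i` non-central vertices
`some ⟨i, 0⟩, …, some ⟨i, l i - 1⟩`, consecutive ones adjacent, and the central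
vertex adjacent to the first and last of them. -/
def kCycleGraph (k : ℕ) (l : Fin k → ℕ) :
    SimpleGraph (Option (Σ i : Fin k, Fin (l i))) :=
  SimpleGraph.fromRel (fun x y =>
    match x, y with
    | none, some ⟨i, j⟩ => (j : ℕ) = 0 ∨ (j : ℕ) + 1 = l i
    | some ⟨i, j⟩, some ⟨i', j'⟩ => (i : ℕ) = i' ∧ (j : ℕ) + 1 = j'
    | _, _ => False)

namespace Stmt10Aux

lemma some_eq_iff {k : ℕ} {l : Fin k → ℕ} {i i' : Fin k} {j : Fin (l i)} {j' : Fin (l i')} :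
    (some ⟨i, j⟩ : Option (Σ i : Fin k, Fin (l i))) = some ⟨i', j'⟩ ↔
      ((i : ℕ) = i' ∧ (j : ℕ) = j') := by
  constructor
  · intro hc
    obtain ⟨h1, h2⟩ := Sigma.mk.inj_iff.mp (Option.some_injective _ hc)
    subst h1
    exact ⟨rfl, congrArg Fin.val (eq_of_heq h2)⟩
  · rintro ⟨h1, h2⟩
    have hii : i = i' := Fin.ext h1
    subst hii
    have : j = j' := Fin.ext h2
    rw [this]

lemma adj_iff {k : ℕ} {l : Fin k → ℕ} (x y : Option (Σ i : Fin k, Fin (l i))) :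
    (kCycleGraph k l).Adj x y ↔ x ≠ y ∧
      ((match x, y with
        | none, some ⟨i, j⟩ => (j : ℕ) = 0 ∨ (j : ℕ) + 1 = l i
        | some ⟨i, j⟩, some ⟨i', j'⟩ => (i : ℕ) = i' ∧ (j : ℕ) + 1 = j'
        | _, _ => False) ∨
       (match y, x with
        | none, some ⟨i, j⟩ => (j : ℕ) = 0 ∨ (j : ℕ) + 1 = l i
        | some ⟨i, j⟩, some ⟨i', j'⟩ => (i : ℕ) = i' ∧ (j : ℕ) + 1 = j'
        | _, _ => False)) := by
  rw [kCycleGraph, SimpleGraph.fromRel_adj]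

lemma adj_none_some {k : ℕ} {l : Fin k → ℕ} (i : Fin k) (j : Fin (l i)) :
    (kCycleGraph k l).Adj none (some ⟨i, j⟩) ↔ ((j : ℕ) = 0 ∨ (j : ℕ) + 1 = l i) := by
  rw [adj_iff]
  simp

lemma adj_some_some {k : ℕ} {l : Fin k → ℕ} (i i' : Fin k) (j : Fin (l i)) (j' : Fin (l i')) :
    (kCycleGraph k l).Adj (some ⟨i, j⟩) (some ⟨i', j'⟩) ↔
      (¬((i : ℕ) = i' ∧ (j : ℕ) = j')) ∧
        (((i : ℕ) = i' ∧ (j : ℕ) + 1 = j') ∨ ((i' : ℕ) = i ∧ (j' : ℕ) + 1 = j)) := by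
  rw [adj_iff, Ne, some_eq_iff]

def tv (k lc : ℕ) {l : Fin k → ℕ} : Option (Σ i : Fin k, Fin (l i)) → ℕ
  | none => 0
  | some ⟨i, j⟩ => min ((i:ℕ)+1+(j:ℕ)) (2*k - (i:ℕ) + (lc-1-(j:ℕ)))

def gf (k lc : ℕ) {l : Fin k → ℕ} : Option (Σ i : Fin k, Fin (l i)) → Option (Σ i : Fin k, Fin (l i))
  | none => none
  | some ⟨i, j⟩ =>
    if (i:ℕ)+1+(j:ℕ) ≤ 2*k - (i:ℕ) + (lc-1-(j:ℕ)) then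
      if (j:ℕ) = 0 then none
      else some ⟨i, ⟨(j:ℕ)-1, lt_of_le_of_lt (Nat.sub_le _ _) j.2⟩⟩
    else
      if h : (j:ℕ)+1 = l i then none
      else some ⟨i, ⟨(j:ℕ)+1, lt_of_le_of_ne j.2 h⟩⟩

lemma upper (k : ℕ) (hk : 0 < k) (lc : ℕ) (hlc : 2 ≤ lc) (l : Fin k → ℕ) (hl : ∀ i, l i = lc) :
    IsBroadcastIn (kCycleGraph k l) none (k + lc / 2) := by
  refine ⟨fun n => {v | tv k lc v ≤ n}, ?_, ?_, ?_, ?_⟩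
  · ext v
    rcases v with _ | ⟨i, j⟩
    · simp [tv]
    · have hi := i.2
      have hli := hl i
      have hj := j.2
      simp only [Set.mem_setOf_eq, Set.mem_singleton_iff, tv, Option.some_ne_none, iff_false]
      omega
  · intro n v hv
    exact Nat.le_succ_of_le hv
  · intro n
    refine ⟨gf k lc, ?_, ?_⟩
    · rintro (_ | ⟨i, j⟩) hu (_ | ⟨i', j'⟩) hu' heq
      · rfl
      · exact absurd (Nat.zero_le n : tv k lc (l := l) none ≤ n) hu.2
      · exact absurd (Nat.zero_le n : tv k lc (l := l) none ≤ n) hu'.2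
      · have hi := i.2; have hj := j.2; have hi' := i'.2; have hj' := j'.2
        have hli := hl i; have hli' := hl i'
        obtain ⟨hu1, hu2⟩ := hu
        obtain ⟨hu1', hu2'⟩ := hu'
        simp only [Set.mem_setOf_eq, tv] at hu1 hu2 hu1' hu2'
        simp only [gf] at heq
        rw [some_eq_iff]
        split_ifs at heq <;>
          first
            | omega
            | (rw [some_eq_iff] at heq
               simp only [Fin.val_mk] at heq
               omega)
            | simp at heq
    · rintro (_ | ⟨i, j⟩) hu
      · exact absurd (Nat.zero_le n : tv k lc (l := l) none ≤ n) hu.2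
      · have hi := i.2; have hj := j.2
        have hli := hl i
        obtain ⟨hu1, hu2⟩ := hu
        simp only [Set.mem_setOf_eq, tv] at hu1 hu2
        simp only [gf]
        split_ifs with h1 h2 h2
        · refine ⟨by simp [tv], ?_⟩
          rw [adj_iff]
          exact ⟨by simp, Or.inl (Or.inl h2)⟩
        · constructor
          · simp only [Set.mem_setOf_eq, tv, Fin.val_mk]
            omega
          · rw [adj_iff]
            constructor
            · rw [Ne, some_eq_iff]
              simp only [Fin.val_mk]
              omega
            · exact Or.inl ⟨rfl, by simp only [Fin.val_mk]; omega⟩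
        · refine ⟨by simp [tv], ?_⟩
          rw [adj_iff]
          exact ⟨by simp, Or.inl (Or.inr h2)⟩
        · constructor
          · simp only [Set.mem_setOf_eq, tv, Fin.val_mk]
            omega
          · rw [adj_iff]
            constructor
            · rw [Ne, some_eq_iff]
              simp only [Fin.val_mk]
              omega
            · exact Or.inr ⟨rfl, by simp only [Fin.val_mk]⟩
  · ext v
    simp only [Set.mem_setOf_eq, Set.mem_univ, iff_true]
    rcases v with _ | ⟨i, j⟩
    · simp [tv]
    · have hi := i.2
      have hli := hl i
      have hj := j.2
      simp only [tv]
      omega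

lemma lower (k : ℕ) (hk : 0 < k) (lc : ℕ) (hlc : 2 ≤ lc) (l : Fin k → ℕ) (hl : ∀ i, l i = lc)
    (t : ℕ) (h : IsBroadcastIn (kCycleGraph k l) none t) : k + lc / 2 ≤ t := by
  classical
  obtain ⟨f, h0, hsub, hstep, ht⟩ := h
  have hmono : Monotone f := monotone_nat_of_le_succ hsub
  have hex : ∀ v : Option (Σ i : Fin k, Fin (l i)), ∃ n, v ∈ f n := fun v => ⟨t, ht ▸ Set.mem_univ v⟩
  choose g hg1 hg2 using hstep
  set τ : Option (Σ i : Fin k, Fin (l i)) → ℕ := fun v => Nat.find (hex v) with hτ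
  have hτmem : ∀ v, v ∈ f (τ v) := fun v => Nat.find_spec (hex v)
  have hτle : ∀ v, τ v ≤ t := fun v => Nat.find_le (ht ▸ Set.mem_univ v)
  have hτmin : ∀ v m, m < τ v → v ∉ f m := fun v m hm => Nat.find_min (hex v) hm
  have hτfind : ∀ v m, v ∈ f m → τ v ≤ m := fun v m hm => Nat.find_le hm
  have hτpos : ∀ x : (Σ i : Fin k, Fin (l i)), 1 ≤ τ (some x) := by
    intro x
    by_contra hc
    have h00 : τ (some x) = 0 := by omega
    have hmem := hτmem (some x)
    rw [h00, h0] at hmem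
    simp at hmem
  have hdiff : ∀ x : (Σ i : Fin k, Fin (l i)),
      some x ∈ f (τ (some x) - 1 + 1) \ f (τ (some x) - 1) := by
    intro x
    have h1 := hτpos x
    constructor
    · have : τ (some x) - 1 + 1 = τ (some x) := by omega
      rw [this]; exact hτmem _
    · exact hτmin _ _ (by omega)
  -- caller
  set cl : (Σ i : Fin k, Fin (l i)) → Option (Σ i : Fin k, Fin (l i)) :=
    fun x => g (τ (some x) - 1) (some x) with hcl
  have hclmem : ∀ x, cl x ∈ f (τ (some x) - 1) := fun x => (hg2 _ _ (hdiff x)).1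
  have hcladj : ∀ x, (kCycleGraph k l).Adj (cl x) (some x) := fun x => (hg2 _ _ (hdiff x)).2
  have hclτ : ∀ x, τ (cl x) ≤ τ (some x) - 1 := fun x => hτfind _ _ (hclmem x)
  have hclinj : ∀ x y, τ (some x) = τ (some y) → cl x = none → cl y = none → x = y := by
    intro x y hτxy hx hy
    have := hg1 (τ (some x) - 1) (hdiff x) (by rw [hτxy]; exact hdiff y)
      (by rw [hcl] at hx hy; rw [show g (τ (some x) - 1) (some x) = none from hx,
            hτxy, show g (τ (some y) - 1) (some y) = none from hy])
    exact Option.some_injective _ this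
  
  -- ports of each cycle
  have h0lt : ∀ i : Fin k, 0 < l i := fun i => by rw [hl]; omega
  have hLlt : ∀ i : Fin k, lc - 1 < l i := fun i => by rw [hl]; omega
  set p0 : Fin k → (Σ i : Fin k, Fin (l i)) := fun i => ⟨i, ⟨0, h0lt i⟩⟩ with hp0
  set pL : Fin k → (Σ i : Fin k, Fin (l i)) := fun i => ⟨i, ⟨lc - 1, hLlt i⟩⟩ with hpL
  set α : Fin k → ℕ := fun i => if cl (p0 i) = none then τ (some (p0 i)) else t + 1 with hα
  set β : Fin k → ℕ := fun i => if cl (pL i) = none then τ (some (pL i)) else t + 1 with hβ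
  -- key induction: information in a cycle comes from its ports
  have key : ∀ n : ℕ, ∀ i : Fin k, ∀ j : Fin (l i), τ (some ⟨i, j⟩) = n →
      min (α i + (j : ℕ)) (β i + (lc - 1 - (j : ℕ))) ≤ n := by
    intro n
    induction n using Nat.strong_induction_on with
    | _ n ih =>
      intro i j hτn
      have hjlt := j.2
      have hli := hl i
      have hpos := hτpos ⟨i, j⟩
      have hadj := hcladj ⟨i, j⟩
      have hclt := hclτ ⟨i, j⟩
      rcases hcv : cl ⟨i, j⟩ with _ | ⟨i', j'⟩
      · -- called by the center: j is a port
        rw [hcv, adj_none_some] at hadj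
        rcases hadj with hj0' | hjL'
        · have hj0 : (j : ℕ) = 0 := hj0'
          have hje : j = ⟨0, h0lt i⟩ := Fin.ext (by simp only [Fin.val_mk]; omega)
          have hpe : p0 i = ⟨i, j⟩ := by rw [hje]
          have : α i = n := by
            simp only [hα]
            rw [hpe, if_pos hcv]
            exact hτn
          calc min (α i + (j : ℕ)) (β i + (lc - 1 - (j : ℕ))) ≤ α i + (j : ℕ) := min_le_left _ _
            _ ≤ n := by omega
        · have hjL : (j : ℕ) + 1 = l i := hjL'
          have hje : j = ⟨lc - 1, hLlt i⟩ := Fin.ext (by simp only [Fin.val_mk]; omega)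
          have hpe : pL i = ⟨i, j⟩ := by rw [hje]
          have : β i = n := by
            simp only [hβ]
            rw [hpe, if_pos hcv]
            exact hτn
          calc min (α i + (j : ℕ)) (β i + (lc - 1 - (j : ℕ)))
              ≤ β i + (lc - 1 - (j : ℕ)) := min_le_right _ _
            _ ≤ n := by omega
      · -- called from within the cycle
        rw [hcv] at hadj hclt
        rw [adj_some_some] at hadj
        obtain ⟨-, hrel⟩ := hadj
        have hii : (i : ℕ) = (i' : ℕ) := by
          rcases hrel with ⟨h1, -⟩ | ⟨h1, -⟩
          · exact h1.symm
          · exact h1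
        have hie : i = i' := Fin.ext hii
        subst hie
        have hjj : (j' : ℕ) + 1 = (j : ℕ) ∨ (j : ℕ) + 1 = (j' : ℕ) := by
          rcases hrel with ⟨-, h2⟩ | ⟨-, h2⟩
          · exact Or.inl h2
          · exact Or.inr h2
        have hlt : τ (some ⟨i, j'⟩) < n := by omega
        have := ih (τ (some ⟨i, j'⟩)) hlt i j' rfl
        have hj'lt := j'.2
        omega
  have hub : ∀ (i : Fin k) (j : Fin (l i)),
      min (α i + (j : ℕ)) (β i + (lc - 1 - (j : ℕ))) ≤ t :=
    fun i j => le_trans (key _ i j rfl) (hτle _)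
  have hαle : ∀ i, α i ≤ t + 1 := by
    intro i
    simp only [hα]
    split_ifs
    · exact le_trans (hτle _) (by omega)
    · exact le_refl _
  have hβle : ∀ i, β i ≤ t + 1 := by
    intro i
    simp only [hβ]
    split_ifs
    · exact le_trans (hτle _) (by omega)
    · exact le_refl _
  
  have hone : ∀ i : Fin k, α i ≤ t ∨ β i ≤ t := by
    intro i
    have h3 := hub i ⟨0, h0lt i⟩
    simp only [Fin.val_mk] at h3
    have h1 := hαle i; have h2 := hβle i
    omega
  have hαnone : ∀ i, α i ≤ t → cl (p0 i) = none ∧ τ (some (p0 i)) = α i := by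
    intro i hi
    by_cases hc : cl (p0 i) = none
    · refine ⟨hc, ?_⟩
      simp only [hα, if_pos hc]
    · exfalso
      have : α i = t + 1 := by simp only [hα, if_neg hc]
      omega
  have hβnone : ∀ i, β i ≤ t → cl (pL i) = none ∧ τ (some (pL i)) = β i := by
    intro i hi
    by_cases hc : cl (pL i) = none
    · refine ⟨hc, ?_⟩
      simp only [hβ, if_pos hc]
    · exfalso
      have : β i = t + 1 := by simp only [hβ, if_neg hc]
      omega
  set m : Fin k → ℕ := fun i => min (α i) (β i) with hm
  set p : Fin k → (Σ i : Fin k, Fin (l i)) := fun i => if α i ≤ β i then p0 i else pL i with hp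
  have hpspec : ∀ i, cl (p i) = none ∧ τ (some (p i)) = m i ∧ (p i).1 = i := by
    intro i
    simp only [hp, hm]
    by_cases hc : α i ≤ β i
    · rw [if_pos hc, min_eq_left hc]
      have hα' : α i ≤ t := by rcases hone i with h | h <;> omega
      obtain ⟨h1, h2⟩ := hαnone i hα'
      exact ⟨h1, h2, rfl⟩
    · rw [if_neg hc, min_eq_right (le_of_not_ge hc)]
      have hβ' : β i ≤ t := by rcases hone i with h | h <;> omega
      obtain ⟨h1, h2⟩ := hβnone i hβ'
      exact ⟨h1, h2, rfl⟩
  have hminj : Function.Injective m := by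
    intro a b hab
    obtain ⟨ha1, ha2, ha3⟩ := hpspec a
    obtain ⟨hb1, hb2, hb3⟩ := hpspec b
    have hpe : p a = p b := hclinj _ _ (by rw [ha2, hb2, hab]) ha1 hb1
    rw [← ha3, ← hb3, hpe]
  have hm1 : ∀ i, 1 ≤ m i := by
    intro i
    have h1 := hτpos (p i)
    rw [(hpspec i).2.1] at h1
    exact h1
  obtain ⟨i0, hi0⟩ : ∃ i0, k ≤ m i0 := by
    by_contra hc
    push_neg at hc
    have hcard := Finset.card_le_card_of_injOn (s := Finset.univ) (t := Finset.Icc 1 (k - 1)) m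
      (fun i _ => Finset.mem_Icc.mpr ⟨hm1 i, by have := hc i; omega⟩)
      (fun a _ b _ hab => hminj hab)
    have h1 : (Finset.univ : Finset (Fin k)).card = k := Finset.card_fin k
    have h2 : (Finset.Icc 1 (k - 1)).card = k - 1 := by rw [Nat.card_Icc]; omega
    omega
  have hmm : m i0 = min (α i0) (β i0) := rfl
  have ha := hαle i0
  have hb := hβle i0
  by_cases hca : α i0 ≤ t <;> by_cases hcb : β i0 ≤ t
  · obtain ⟨ha1, ha2⟩ := hαnone i0 hca
    obtain ⟨hb1, hb2⟩ := hβnone i0 hcb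
    have hne : α i0 ≠ β i0 := by
      intro he
      have hpe : p0 i0 = pL i0 := hclinj _ _ (by rw [ha2, hb2, he]) ha1 hb1
      have h2 : ((p0 i0).2 : ℕ) = ((pL i0).2 : ℕ) := by rw [hpe]
      change (0:ℕ) = lc - 1 at h2
      omega
    rcases le_or_gt (α i0) (β i0) with hab | hab
    · have h3 := hub i0 ⟨lc / 2, by rw [hl]; omega⟩
      simp only [Fin.val_mk] at h3
      omega
    · have h3 := hub i0 ⟨lc - 1 - lc / 2, by rw [hl]; omega⟩
      simp only [Fin.val_mk] at h3
      omega
  · have h3 := hub i0 ⟨lc - 1, hLlt i0⟩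
    simp only [Fin.val_mk] at h3
    omega
  · have h3 := hub i0 ⟨0, h0lt i0⟩
    simp only [Fin.val_mk] at h3
    omega
  · rcases hone i0 with h | h <;> omega

end Stmt10Aux


/-- In a `k`-cycle graph all of whose cycles have the same length
`l` (non-central vertices per cycle), the scheme where the central vertex informs
cycle `C_i` at times `i` and `2k+1-i` completes in exactly `k + ⌈(l-1)/2⌉` time
units, and this equals the broadcast time of the central vertex. -/
theorem stmt10 (k : ℕ) (hk : 0 < k) (lc : ℕ) (hlc : 2 ≤ lc)
    (l : Fin k → ℕ) (hl : ∀ i, l i = lc) :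
    ∃ T : ℕ, (T : ℤ) = k + ⌈((lc : ℚ) - 1) / 2⌉ ∧
      IsBroadcastIn (kCycleGraph k l) none T ∧
      broadcastTime (kCycleGraph k l) none = T := by
  have hup := Stmt10Aux.upper k hk lc hlc l hl
  refine ⟨k + lc / 2, ?_, hup, ?_⟩
  · have hceil : ⌈((lc : ℚ) - 1) / 2⌉ = (lc : ℤ) / 2 := by
      rcases Nat.even_or_odd lc with ⟨c, hc⟩ | ⟨c, hc⟩ <;> subst hc
      · rw [show (((c + c : ℕ) : ℚ) - 1) / 2 = (c : ℚ) - 1/2 by push_cast; ring]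
        have h1 : ⌈(c : ℚ) - 1/2⌉ = (c : ℤ) := by
          rw [Int.ceil_eq_iff]
          constructor <;> push_cast <;> norm_num
        rw [h1]
        omega
      · rw [show (((2 * c + 1 : ℕ) : ℚ) - 1) / 2 = (c : ℚ) by push_cast; ring]
        rw [Int.ceil_natCast]
        omega
    rw [hceil]
    omega
  · refine le_antisymm (Nat.sInf_le hup) (le_csInf ⟨_, hup⟩ ?_)
    intro b hb
    exact Stmt10Aux.lower k hk lc hlc l hl b hb
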